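/- Martingale-exponential bound for the EXP3.P estimator: let (p_t)_{t=1}^T be full-support probability vectors on a finite set Π, π_t ∼ p_t (conditionally on the past), g_t : Π → [0,1] arbitrary (possibly adapted), β ∈ (0,1], and g̃_t(π) = (g_t(π) 1{π_t=π} + β)/p_t(π). Then for each fixed π ∈ Π, E[ exp( Σ_{t=1}^T ( β g_t(π) − β g_t(π)1{π_t=π}/p_t(π) − β²/p_t(π) ) ) ] ≤ 1. -/

import Mathlib

/-- The history (prefix of length `t`) of a path `ω` of arm choices. -/
def res {ι : Type*} {T : ℕ} (ω : Fin T → ι) (t : Fin T) : Fin (t : ℕ) → ι :=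
  fun i => ω ⟨i, i.isLt.trans t.isLt⟩

lemma res_zero {ι : Type*} {T : ℕ} (ω : Fin (T+1) → ι) : res ω 0 = Fin.elim0 := by
  funext j; exact j.elim0

lemma res_cons {ι : Type*} {T : ℕ} (i : ι) (ω' : Fin T → ι) (t' : Fin T) :
    res (Fin.cons i ω' : Fin (T+1) → ι) t'.succ = Fin.cons i (res ω' t') := by
  funext j
  refine Fin.cases ?_ (fun k => ?_) j
  · simp [res]
  · have h1 := Fin.cons_succ (α := fun _ => ι) i ω' ⟨(k : ℕ), lt_of_lt_of_le k.isLt (le_of_lt t'.isLt)⟩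
    have h2 := Fin.cons_succ (α := fun _ => ι) i (res ω' t') k
    exact h1.trans h2.symm



lemma exp_le_one_add_add_sq {x : ℝ} (hx : x ≤ 1) : Real.exp x ≤ 1 + x + x^2 := by
  rcases le_or_gt x 0 with h | h
  · have h1 : 1 - x ≤ Real.exp (-x) := by
      have := Real.add_one_le_exp (-x); linarith
    have h2 : Real.exp x * (1 - x) ≤ 1 := by
      have := mul_le_mul_of_nonneg_left h1 (Real.exp_pos x).le
      rwa [← Real.exp_add, add_neg_cancel, Real.exp_zero] at this
    have hx3 : x^3 ≤ 0 := by
      have h3 : Odd 3 := by decide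
      exact h3.pow_nonpos h
    nlinarith [Real.exp_pos x]
  · have hb := Real.exp_bound (x := x) (by rw [abs_of_pos h]; exact hx) (n := 3) (by norm_num)
    rw [abs_of_pos h] at hb
    have hsum : ∑ m ∈ Finset.range 3, x ^ m / (m.factorial : ℝ) = 1 + x + x^2/2 := by
      rw [Finset.sum_range_succ, Finset.sum_range_succ, Finset.sum_range_succ,
        Finset.sum_range_zero]
      norm_num [Nat.factorial]
    rw [hsum] at hb
    have h3 : x^3 ≤ x^2 := by nlinarith
    have h4 := (abs_le.mp hb).2
    have hfac : ((Nat.factorial 3 : ℕ) : ℝ) = 6 := by norm_num [Nat.factorial]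
    rw [hfac] at h4
    norm_num at h4
    nlinarith

lemma step_bound {ι : Type*} [Fintype ι] [DecidableEq ι]
    (q : ι → ℝ) (hpos : ∀ i, 0 < q i) (hsum : ∑ i, q i = 1)
    (β c : ℝ) (hβ0 : 0 < β) (hβ1 : β ≤ 1) (hc0 : 0 ≤ c) (hcβ : c ≤ β) (π : ι) :
    ∑ i, q i * Real.exp (c - c * (if i = π then 1 else 0) / q π - β^2 / q π) ≤ 1 := by
  set q0 := q π with hq0def
  have hq0 : 0 < q0 := hpos π
  have hq0' : q0 ≤ 1 := by
    rw [← hsum]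
    exact Finset.single_le_sum (fun i _ => (hpos i).le) (Finset.mem_univ π)
  have hrest : ∑ i ∈ Finset.univ.erase π, q i = 1 - q0 := by
    have := Finset.add_sum_erase Finset.univ q (Finset.mem_univ π)
    linarith [this.symm ▸ hsum]
  rw [← Finset.add_sum_erase Finset.univ _ (Finset.mem_univ π)]
  have herase : ∑ i ∈ Finset.univ.erase π, q i * Real.exp (c - c * (if i = π then 1 else 0) / q π - β^2 / q π)
      = (1 - q0) * Real.exp (c - β^2 / q0) := by
    rw [← hrest, Finset.sum_mul]
    refine Finset.sum_congr rfl fun i hi => ?_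
    rw [if_neg (Finset.ne_of_mem_erase hi)]
    ring_nf
    rw [hq0def, mul_comm (β ^ 2)]
  rw [herase, if_pos rfl]
  -- now : q0 * exp (c - c/q0 - β²/q0) + (1-q0) * exp (c - β²/q0) ≤ 1
  have key : q0 * Real.exp (c - c / q0) + (1 - q0) * Real.exp c ≤ Real.exp (β^2 / q0) := by
    have e1 : Real.exp (c - c / q0) ≤ 1 + (c - c/q0) + (c - c/q0)^2 := by
      apply exp_le_one_add_add_sq
      have : c ≤ c / q0 := (le_div_iff₀ hq0).mpr (by nlinarith)
      linarith
    have e2 : Real.exp c ≤ 1 + c + c^2 := exp_le_one_add_add_sq (le_trans hcβ hβ1)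
    have e3 : (1 : ℝ) + β^2/q0 ≤ Real.exp (β^2/q0) := by
      have := Real.add_one_le_exp (β^2/q0); linarith
    have harith : q0 * (1 + (c - c/q0) + (c - c/q0)^2) + (1 - q0) * (1 + c + c^2) ≤ 1 + β^2/q0 := by
      have hd : q0 * (c / q0) = c := by field_simp
      have hdd : q0 * ((c/q0) * (c/q0)) = c * (c/q0) := by field_simp
      have hcd : q0 * (c * (c/q0)) = c * c := by field_simp
      have hcd2 : c * (c/q0) = c^2/q0 := by ring
      have h5 : c^2/q0 ≤ β^2/q0 := by gcongr <;> nlinarith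
      nlinarith [hd, hdd, hcd, hcd2, h5]
    nlinarith [mul_le_mul_of_nonneg_left e1 hq0.le, mul_le_mul_of_nonneg_left e2 (by linarith : (0:ℝ) ≤ 1 - q0)]
  have expand : q0 * Real.exp (c - c * 1 / q0 - β^2 / q0) + (1 - q0) * Real.exp (c - β^2 / q0)
      = (q0 * Real.exp (c - c / q0) + (1 - q0) * Real.exp c) * Real.exp (-(β^2/q0)) := by
    rw [mul_one]
    rw [show c - c/q0 - β^2/q0 = (c - c/q0) + (-(β^2/q0)) by ring,
        show c - β^2/q0 = c + (-(β^2/q0)) by ring, Real.exp_add, Real.exp_add]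
    ring
  rw [expand]
  calc (q0 * Real.exp (c - c / q0) + (1 - q0) * Real.exp c) * Real.exp (-(β^2/q0))
      ≤ Real.exp (β^2/q0) * Real.exp (-(β^2/q0)) := by
        apply mul_le_mul_of_nonneg_right key (Real.exp_pos _).le
    _ = 1 := by rw [← Real.exp_add, add_neg_cancel, Real.exp_zero]

lemma main_aux {ι : Type*} [Fintype ι] [DecidableEq ι]
    (β : ℝ) (hβ0 : 0 < β) (hβ1 : β ≤ 1) (π : ι) :
    ∀ (T : ℕ) (p : (t : Fin T) → (Fin (t : ℕ) → ι) → ι → ℝ),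
      (∀ t h i, 0 < p t h i) → (∀ t h, ∑ i, p t h i = 1) →
    ∀ (g : (t : Fin T) → (Fin (t : ℕ) → ι) → ι → ℝ),
      (∀ t h i, g t h i ∈ Set.Icc (0:ℝ) 1) →
    ∑ ω : Fin T → ι,
      (∏ t, p t (res ω t) (ω t)) *
        Real.exp (∑ t,
          (β * g t (res ω t) π
            - β * g t (res ω t) π * (if ω t = π then 1 else 0) / p t (res ω t) π
            - β^2 / p t (res ω t) π)) ≤ 1 := by
  intro T
  induction T with
  | zero =>
    intro p hp_pos hp_sum g hg
    simp
  | succ T ih =>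
    intro p hp_pos hp_sum g hg
    -- reindex the sum via Fin.cons
    have hre : ∑ ω : Fin (T+1) → ι,
        (∏ t, p t (res ω t) (ω t)) *
          Real.exp (∑ t,
            (β * g t (res ω t) π
              - β * g t (res ω t) π * (if ω t = π then 1 else 0) / p t (res ω t) π
              - β^2 / p t (res ω t) π))
        = ∑ i : ι, ∑ ω' : Fin T → ι,
        (∏ t, p t (res (Fin.cons i ω' : Fin (T+1) → ι) t) ((Fin.cons i ω' : Fin (T+1) → ι) t)) *
          Real.exp (∑ t,
            (β * g t (res (Fin.cons i ω' : Fin (T+1) → ι) t) π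
              - β * g t (res (Fin.cons i ω' : Fin (T+1) → ι) t) π * (if (Fin.cons i ω' : Fin (T+1) → ι) t = π then 1 else 0)
                / p t (res (Fin.cons i ω' : Fin (T+1) → ι) t) π
              - β^2 / p t (res (Fin.cons i ω' : Fin (T+1) → ι) t) π)) := by
      rw [← Equiv.sum_comp (Fin.consEquiv fun _ => ι), Fintype.sum_prod_type]
      rfl
    rw [hre]
    -- the inner quantity for step t = 0
    set q : ι → ℝ := p 0 Fin.elim0 with hq
    set c : ℝ := β * g 0 Fin.elim0 π with hc
    have hsplit : ∀ i : ι, ∑ ω' : Fin T → ι,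
        (∏ t, p t (res (Fin.cons i ω' : Fin (T+1) → ι) t) ((Fin.cons i ω' : Fin (T+1) → ι) t)) *
          Real.exp (∑ t,
            (β * g t (res (Fin.cons i ω' : Fin (T+1) → ι) t) π
              - β * g t (res (Fin.cons i ω' : Fin (T+1) → ι) t) π * (if (Fin.cons i ω' : Fin (T+1) → ι) t = π then 1 else 0)
                / p t (res (Fin.cons i ω' : Fin (T+1) → ι) t) π
              - β^2 / p t (res (Fin.cons i ω' : Fin (T+1) → ι) t) π))
        = (q i * Real.exp (c - c * (if i = π then 1 else 0) / q π - β^2 / q π)) *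
          ∑ ω' : Fin T → ι,
            (∏ t', p t'.succ (Fin.cons i (res ω' t')) (ω' t')) *
              Real.exp (∑ t',
                (β * g t'.succ (Fin.cons i (res ω' t')) π
                  - β * g t'.succ (Fin.cons i (res ω' t')) π * (if ω' t' = π then 1 else 0)
                    / p t'.succ (Fin.cons i (res ω' t')) π
                  - β^2 / p t'.succ (Fin.cons i (res ω' t')) π)) := by
      intro i
      rw [Finset.mul_sum]
      refine Finset.sum_congr rfl fun ω' _ => ?_
      rw [Fin.prod_univ_succ, Fin.sum_univ_succ]
      simp only [res_zero, res_cons, Fin.cons_zero, Fin.cons_succ]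
      rw [Real.exp_add]
      ring
    calc ∑ i : ι, ∑ ω' : Fin T → ι,
        (∏ t, p t (res (Fin.cons i ω' : Fin (T+1) → ι) t) ((Fin.cons i ω' : Fin (T+1) → ι) t)) *
          Real.exp (∑ t,
            (β * g t (res (Fin.cons i ω' : Fin (T+1) → ι) t) π
              - β * g t (res (Fin.cons i ω' : Fin (T+1) → ι) t) π * (if (Fin.cons i ω' : Fin (T+1) → ι) t = π then 1 else 0)
                / p t (res (Fin.cons i ω' : Fin (T+1) → ι) t) π
              - β^2 / p t (res (Fin.cons i ω' : Fin (T+1) → ι) t) π))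
        = ∑ i : ι, (q i * Real.exp (c - c * (if i = π then 1 else 0) / q π - β^2 / q π)) *
          ∑ ω' : Fin T → ι,
            (∏ t', p t'.succ (Fin.cons i (res ω' t')) (ω' t')) *
              Real.exp (∑ t',
                (β * g t'.succ (Fin.cons i (res ω' t')) π
                  - β * g t'.succ (Fin.cons i (res ω' t')) π * (if ω' t' = π then 1 else 0)
                    / p t'.succ (Fin.cons i (res ω' t')) π
                  - β^2 / p t'.succ (Fin.cons i (res ω' t')) π)) :=
          Finset.sum_congr rfl fun i _ => hsplit i
      _ ≤ ∑ i : ι, (q i * Real.exp (c - c * (if i = π then 1 else 0) / q π - β^2 / q π)) * 1 := by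
          gcongr with i _
          · exact mul_nonneg (hp_pos _ _ _).le (Real.exp_pos _).le
          · exact ih (fun t' h' => p t'.succ (Fin.cons i h'))
              (fun t' h' j => hp_pos _ _ _) (fun t' h' => hp_sum _ _)
              (fun t' h' => g t'.succ (Fin.cons i h')) (fun t' h' j => hg _ _ _)
      _ ≤ 1 := by
          simp only [mul_one]
          refine step_bound q (fun i => hp_pos _ _ _) (hp_sum _ _) β c hβ0 hβ1
            (mul_nonneg hβ0.le (hg 0 Fin.elim0 π).1) ?_ π
          calc c = β * g 0 Fin.elim0 π := hc
            _ ≤ β * 1 := by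
                exact mul_le_mul_of_nonneg_left (hg 0 Fin.elim0 π).2 hβ0.le
            _ = β := mul_one β

theorem exp3p_supermartingale_bound {ι : Type*} [Fintype ι] [DecidableEq ι] (T : ℕ)
    (p : (t : Fin T) → (Fin (t : ℕ) → ι) → ι → ℝ)
    (hp_pos : ∀ t h i, 0 < p t h i)
    (hp_sum : ∀ t h, ∑ i, p t h i = 1)
    (g : (t : Fin T) → (Fin (t : ℕ) → ι) → ι → ℝ)
    (hg : ∀ t h i, g t h i ∈ Set.Icc (0:ℝ) 1)
    (β : ℝ) (hβ0 : 0 < β) (hβ1 : β ≤ 1) (π : ι) :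
    ∑ ω : Fin T → ι,
      (∏ t, p t (res ω t) (ω t)) *
        Real.exp (∑ t,
          (β * g t (res ω t) π
            - β * g t (res ω t) π * (if ω t = π then 1 else 0) / p t (res ω t) π
            - β^2 / p t (res ω t) π)) ≤ 1 := by
  exact main_aux β hβ0 hβ1 π T p hp_pos hp_sum g hg
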